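/- arXiv:cs/0409029 — 4 statements merged into one kernel-verified Lean document; each statement's English description precedes it below -/
import Mathlib

section
/- Let Q ≥ 2 be an integer and B ≥ 2 a real number such that every prime factor q of Q satisfies q ≥ B. Then φ(Q)/(Q - 1) ≥ (1 + 1/(Q - 1)) · (1 - 1/B)^{log_B Q}, where log_B Q = (ln Q)/(ln B) and the power is the real power function. -/
/-- Let `Q ≥ 2` be an integer and `B ≥ 2` a real number such that every prime factor
`q` of `Q` satisfies `q ≥ B`. Then `φ(Q)/(Q - 1) ≥ (1 + 1/(Q - 1)) · (1 - 1/B)^{log_B Q}`,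
where `log_B Q = (ln Q)/(ln B)` and the power is the real power function. -/
theorem totient_ratio_ge
    (Q : ℕ) (hQ : 2 ≤ Q) (B : ℝ) (hB : 2 ≤ B)
    (hfac : ∀ q : ℕ, q.Prime → q ∣ Q → B ≤ (q : ℝ)) :
    (1 + 1 / ((Q : ℝ) - 1)) * (1 - 1 / B) ^ (Real.log Q / Real.log B) ≤
      (Nat.totient Q : ℝ) / ((Q : ℝ) - 1) := by
  have hQ1 : (1 : ℝ) < (Q : ℝ) := by exact_mod_cast hQ.trans_lt' one_lt_two
  have hQ0 : (0 : ℝ) < (Q : ℝ) := by linarith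
  have hQm1 : (0 : ℝ) < (Q : ℝ) - 1 := by linarith
  have hB0 : (0 : ℝ) < B := by linarith
  have hb0 : (0 : ℝ) < 1 - 1 / B := by
    rw [sub_pos, div_lt_one hB0]; linarith
  have hb1 : 1 - 1 / B ≤ 1 := by
    have : 0 < 1 / B := by positivity
    linarith
  set ω := Q.primeFactors.card with hω
  -- B ^ ω ≤ Q
  have hBpow : B ^ ω ≤ (Q : ℝ) := by
    calc B ^ ω ≤ ∏ p ∈ Q.primeFactors, (p : ℝ) := by
          rw [← Finset.prod_const]
          apply Finset.prod_le_prod (fun _ _ => le_of_lt hB0)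
          intro p hp
          exact hfac p (Nat.prime_of_mem_primeFactors hp) (Nat.dvd_of_mem_primeFactors hp)
      _ ≤ (Q : ℝ) := by
          have := Nat.prod_primeFactors_dvd Q
          have hle : ∏ p ∈ Q.primeFactors, p ≤ Q := Nat.le_of_dvd (by omega) this
          rw [← Nat.cast_prod]
          exact_mod_cast hle
  -- ω ≤ log Q / log B
  have hlogB : (0 : ℝ) < Real.log B := Real.log_pos (by linarith)
  have hωle : (ω : ℝ) ≤ Real.log Q / Real.log B := by
    rw [le_div_iff₀ hlogB]
    calc (ω : ℝ) * Real.log B = Real.log (B ^ ω) := by rw [Real.log_pow]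
      _ ≤ Real.log Q := Real.log_le_log (by positivity) hBpow
  -- rpow comparison
  have hrpow : (1 - 1 / B) ^ (Real.log Q / Real.log B) ≤ (1 - 1 / B) ^ (ω : ℕ) := by
    rw [← Real.rpow_natCast (1 - 1/B) ω]
    exact Real.rpow_le_rpow_of_exponent_ge hb0 hb1 hωle
  -- totient formula
  have htot : ((Q.totient : ℝ)) = (Q : ℝ) * ∏ p ∈ Q.primeFactors, (1 - (p : ℝ)⁻¹) := by
    have h := Nat.totient_eq_mul_prod_factors Q
    have : ((Q.totient : ℚ) : ℝ) = ((Q : ℚ) * ∏ p ∈ Q.primeFactors, (1 - (p : ℚ)⁻¹) : ℚ) := by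
      exact_mod_cast congrArg (fun x : ℚ => (x : ℝ)) h
    push_cast at this ⊢
    exact this
  have hprod : (1 - 1 / B) ^ ω ≤ ∏ p ∈ Q.primeFactors, (1 - (p : ℝ)⁻¹) := by
    rw [← Finset.prod_const]
    apply Finset.prod_le_prod (fun _ _ => le_of_lt hb0)
    intro p hp
    have hpB := hfac p (Nat.prime_of_mem_primeFactors hp) (Nat.dvd_of_mem_primeFactors hp)
    have hp0 : (0 : ℝ) < (p : ℝ) := lt_of_lt_of_le hB0 hpB
    have : (p : ℝ)⁻¹ ≤ 1 / B := by
      rw [one_div]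
      exact inv_anti₀ hB0 hpB
    linarith
  -- combine
  have key : (1 - 1 / B) ^ (Real.log Q / Real.log B) * (Q : ℝ) ≤ (Q.totient : ℝ) := by
    rw [htot]
    calc (1 - 1 / B) ^ (Real.log Q / Real.log B) * (Q : ℝ)
        ≤ (1 - 1 / B) ^ ω * (Q : ℝ) := by
          apply mul_le_mul_of_nonneg_right hrpow (le_of_lt hQ0)
      _ ≤ (∏ p ∈ Q.primeFactors, (1 - (p : ℝ)⁻¹)) * (Q : ℝ) := by
          apply mul_le_mul_of_nonneg_right hprod (le_of_lt hQ0)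
      _ = (Q : ℝ) * ∏ p ∈ Q.primeFactors, (1 - (p : ℝ)⁻¹) := by ring
  have h1 : 1 + 1 / ((Q : ℝ) - 1) = (Q : ℝ) / ((Q : ℝ) - 1) := by
    field_simp
    ring
  rw [h1, div_mul_eq_mul_div, div_le_div_iff₀ hQm1 hQm1]
  calc (Q : ℝ) * (1 - 1 / B) ^ (Real.log Q / Real.log B) * ((Q : ℝ) - 1)
      = (1 - 1 / B) ^ (Real.log Q / Real.log B) * (Q : ℝ) * ((Q : ℝ) - 1) := by ring
    _ ≤ (Q.totient : ℝ) * ((Q : ℝ) - 1) := by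
        apply mul_le_mul_of_nonneg_right key (le_of_lt hQm1)
end

section
/- Let ε and h be real numbers with 0 < ε < 1 and h > 1, and set B = ln(h)/ε. If B ≥ 4, then (1 - 1/B)^{log_B h} > 1 - ε, where log_B h = (ln h)/(ln B) and the power is the real power function. -/
/-- Let `ε` and `h` be real numbers with `0 < ε < 1` and `h > 1`, and set
`B = ln(h)/ε`. If `B ≥ 4`, then `(1 - 1/B)^{log_B h} > 1 - ε`, where
`log_B h = (ln h)/(ln B)` and the power is the real power function. -/
theorem cutoff_bound
    (ε h : ℝ) (hε0 : 0 < ε) (hε1 : ε < 1) (hh : 1 < h)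
    (B : ℝ) (hB : B = Real.log h / ε) (hB4 : 4 ≤ B) :
    1 - ε < (1 - 1 / B) ^ (Real.log h / Real.log B) := by
  have hB0 : (0:ℝ) < B := by linarith
  have hlogh : 0 < Real.log h := Real.log_pos hh
  have hεB : Real.log h = ε * B := by
    rw [hB]; field_simp
  -- log B > 4/3
  have hlog4 : Real.log 4 = 2 * Real.log 2 := by
    rw [show (4:ℝ) = 2^2 by norm_num, Real.log_pow]; push_cast; ring
  have hlogB : (4:ℝ)/3 < Real.log B := by
    have h2 := Real.log_two_gt_d9
    have h4 : Real.log 4 ≤ Real.log B := Real.log_le_log (by norm_num) hB4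
    nlinarith
  have hlogB0 : 0 < Real.log B := by linarith
  set p := Real.log h / Real.log B with hp
  have hp0 : 0 < p := div_pos hlogh hlogB0
  have h1B : (0:ℝ) < 1 - 1/B := by
    have : 1/B ≤ 1/4 := by
      rw [div_le_div_iff₀ hB0 (by norm_num)]; linarith
    linarith
  have h1B1 : 1 - 1/B < 1 := by
    have : 0 < 1/B := by positivity
    linarith
  have hlogneg : Real.log (1 - 1/B) < 0 := Real.log_neg h1B h1B1
  -- lower bound on log(1-1/B)
  have hlb : -(1/(B-1)) ≤ Real.log (1 - 1/B) := by
    have hinv : (1 - 1/B)⁻¹ = B/(B-1) := by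
      field_simp
    have hpos : 0 < B/(B-1) := by
      apply div_pos hB0; linarith
    have := Real.log_le_sub_one_of_pos hpos
    have hlog : Real.log (B/(B-1)) = -Real.log (1 - 1/B) := by
      rw [← hinv, Real.log_inv]
    have hB1' : B - 1 ≠ 0 := by intro h; nlinarith [hB4]
    have hval : B/(B-1) - 1 = 1/(B-1) := by
      field_simp
      ring
    rw [hlog, hval] at this
    linarith
  -- (B-1) log B ≥ B
  have hkey : B ≤ (B-1) * Real.log B := by nlinarith
  -- p * (-log(1-1/B)) ≤ ε
  have hmain : p * (-Real.log (1 - 1/B)) ≤ ε := by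
    have h1 : p * (-Real.log (1 - 1/B)) ≤ p * (1/(B-1)) := by
      apply mul_le_mul_of_nonneg_left (by linarith) (le_of_lt hp0)
    have h2 : p * (1/(B-1)) ≤ ε := by
      rw [hp]
      rw [div_mul_eq_mul_div, div_le_iff₀ hlogB0]
      have hB1 : (0:ℝ) < B - 1 := by linarith
      rw [hεB]
      rw [mul_one_div, div_le_iff₀ hB1]
      nlinarith
    linarith
  have hrw : (1 - 1/B) ^ p = Real.exp (Real.log (1 - 1/B) * p) :=
    Real.rpow_def_of_pos h1B p
  rw [hrw]
  have hne : Real.log (1 - 1/B) * p ≠ 0 := by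
    apply ne_of_lt
    exact mul_neg_of_neg_of_pos hlogneg hp0
  have hexp := Real.add_one_lt_exp hne
  nlinarith
end

section
/- Fix a real number h > 1. The function B ↦ (1 - 1/B)^{log_B h} = exp((ln h / ln B) · ln(1 - 1/B)) is strictly monotone increasing on the interval (1, ∞). -/
lemma aux_strictMonoOn_logratio :
    StrictMonoOn (fun B : ℝ => Real.log (B - 1) / Real.log B) (Set.Ioi 1) := by
  apply StrictMonoOn.mono (s := Set.Ioi 1)
    (strictMonoOn_of_deriv_pos (convex_Ioi (1 : ℝ)) ?_ ?_) (le_refl _)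
  · apply ContinuousOn.div
    · exact Real.continuousOn_log.comp (by fun_prop) (by
        intro x hx; simp only [Set.mem_Ioi] at hx
        simp [sub_ne_zero, ne_of_gt hx])
    · exact Real.continuousOn_log.mono (by
        intro x hx; simp only [Set.mem_Ioi] at hx
        simp [ne_of_gt (lt_trans one_pos hx)])
    · intro x hx; simp only [Set.mem_Ioi] at hx
      exact ne_of_gt (Real.log_pos hx)
  · intro x hx
    rw [interior_Ioi] at hx
    simp only [Set.mem_Ioi] at hx
    have hx1 : (0:ℝ) < x - 1 := by linarith
    have hx0 : (0:ℝ) < x := by linarith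
    have hlog : 0 < Real.log x := Real.log_pos hx
    have hd1 : HasDerivAt (fun B : ℝ => Real.log (B - 1)) (1 / (x - 1)) x := by
      have := ((hasDerivAt_id x).sub_const 1).log (ne_of_gt hx1)
      simpa using this
    have hd2 : HasDerivAt Real.log x⁻¹ x := Real.hasDerivAt_log (ne_of_gt hx0)
    have hd : HasDerivAt (fun B : ℝ => Real.log (B - 1) / Real.log B)
        ((1 / (x - 1) * Real.log x - Real.log (x - 1) * x⁻¹) / (Real.log x) ^ 2) x :=
      hd1.div hd2 (ne_of_gt hlog)
    rw [hd.deriv]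
    apply div_pos _ (pow_pos hlog 2)
    rw [sub_pos]
    have key : (x - 1) * Real.log (x - 1) < x * Real.log x := by
      calc (x - 1) * Real.log (x - 1) < (x - 1) * Real.log x := by
            exact mul_lt_mul_of_pos_left (Real.log_lt_log hx1 (by linarith)) hx1
        _ < x * Real.log x := by nlinarith
    rw [div_mul_eq_mul_div, lt_div_iff₀ hx1]
    nlinarith [mul_lt_mul_of_pos_left key (inv_pos.mpr hx0),
      mul_inv_cancel₀ (ne_of_gt hx0)]

/-- Fix a real number `h > 1`. The function
`B ↦ (1 - 1/B)^{log_B h} = exp((ln h / ln B) · ln(1 - 1/B))` is strictly monotone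
increasing on the interval `(1, ∞)`. -/
theorem strictMonoOn_success_probability
    (h : ℝ) (hh : 1 < h) :
    StrictMonoOn (fun B : ℝ => (1 - 1 / B) ^ (Real.log h / Real.log B))
      (Set.Ioi (1 : ℝ)) := by
  have hlogh : 0 < Real.log h := Real.log_pos hh
  have hrepr : ∀ B ∈ Set.Ioi (1:ℝ),
      (1 - 1 / B) ^ (Real.log h / Real.log B)
        = Real.exp (Real.log h * (Real.log (B - 1) / Real.log B - 1)) := by
    intro B hB
    simp only [Set.mem_Ioi] at hB
    have hB0 : (0:ℝ) < B := lt_trans one_pos hB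
    have hB1 : (0:ℝ) < B - 1 := by linarith
    have hbase : (0:ℝ) < 1 - 1 / B := by
      rw [sub_pos, div_lt_one hB0]; exact hB
    have hlogB : 0 < Real.log B := Real.log_pos hB
    rw [Real.rpow_def_of_pos hbase]
    congr 1
    have : (1 : ℝ) - 1 / B = (B - 1) / B := by field_simp
    rw [this, Real.log_div (ne_of_gt hB1) (ne_of_gt hB0)]
    field_simp
  intro a ha b hb hab
  dsimp only
  rw [hrepr a ha, hrepr b hb, Real.exp_lt_exp]
  have := aux_strictMonoOn_logratio ha hb hab
  nlinarith
end

section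
/- Let n ≥ 2 and write n - 1 = k·Q with k ≥ 1. Suppose a natural number a satisfies a^{n-1} ≡ 1 (mod n), and for every prime q dividing k, gcd(a^{(n-1)/q} - 1, n) = 1. Then every prime divisor p of n satisfies p ≡ 1 (mod k); in particular every prime factor of n exceeds k when k ≥ 2. -/
/-- Let `n ≥ 2` and write `n - 1 = k·Q` with `k ≥ 1`. Suppose `a` satisfies
`a^{n-1} ≡ 1 (mod n)` and, for every prime `q` dividing `k`,
`gcd(a^{(n-1)/q} - 1, n) = 1`. Then every prime divisor `p` of `n` satisfies
`p ≡ 1 (mod k)`; in particular every prime factor of `n` exceeds `k` when `k ≥ 2`. -/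
theorem pocklington_style_lemma
    (n : ℕ) (hn : 2 ≤ n) (k Q : ℕ) (hk : 1 ≤ k) (hfact : n - 1 = k * Q)
    (a : ℕ) (ha : a ^ (n - 1) ≡ 1 [MOD n])
    (hgcd : ∀ q : ℕ, q.Prime → q ∣ k → Nat.gcd (a ^ ((n - 1) / q) - 1) n = 1) :
    (∀ p : ℕ, p.Prime → p ∣ n → p ≡ 1 [MOD k]) ∧
      (2 ≤ k → ∀ p : ℕ, p.Prime → p ∣ n → k < p) := by
  have hn1 : 1 ≤ n - 1 := by omega
  -- a is nonzero
  have ha0 : 1 ≤ a := by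
    by_contra h
    have : a = 0 := by omega
    subst this
    have : (0 : ℕ) ^ (n - 1) = 0 := zero_pow (by omega)
    rw [this] at ha
    have h2 := Nat.le_of_dvd one_pos ((Nat.modEq_iff_dvd' (Nat.zero_le 1)).mp ha)
    omega
  have main : ∀ p : ℕ, p.Prime → p ∣ n → k ∣ p - 1 := by
    intro p hp hpn
    haveI : Fact p.Prime := ⟨hp⟩
    set b : ZMod p := (a : ZMod p) with hb
    have hap : a ^ (n - 1) ≡ 1 [MOD p] := ha.of_dvd hpn
    have hb1 : b ^ (n - 1) = 1 := by
      have := (ZMod.natCast_eq_natCast_iff _ _ _).mpr hap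
      push_cast at this
      exact this
    have hbne : b ≠ 0 := by
      intro h
      rw [h, zero_pow (by omega)] at hb1
      exact zero_ne_one hb1
    have hfin : IsOfFinOrder b := isOfFinOrder_iff_pow_eq_one.mpr ⟨n - 1, by omega, hb1⟩
    have hordpos : 0 < orderOf b := hfin.orderOf_pos
    have hord : orderOf b ∣ n - 1 := orderOf_dvd_of_pow_eq_one hb1
    -- no prime q ∣ k allows orderOf b ∣ (n-1)/q
    have hnotdvd : ∀ q : ℕ, q.Prime → q ∣ k → ¬ orderOf b ∣ (n - 1) / q := by
      intro q hq hqk hdvd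
      have hbq : b ^ ((n - 1) / q) = 1 := orderOf_dvd_iff_pow_eq_one.mp hdvd
      have ham : 1 ≤ a ^ ((n - 1) / q) := Nat.one_le_pow _ _ (by omega)
      have hpd : p ∣ a ^ ((n - 1) / q) - 1 := by
        have : ((a ^ ((n - 1) / q) : ℕ) : ZMod p) = ((1 : ℕ) : ZMod p) := by
          push_cast; exact hbq
        have := (ZMod.natCast_eq_natCast_iff _ _ _).mp this
        exact (Nat.modEq_iff_dvd' ham).mp this.symm
      have : p ∣ Nat.gcd (a ^ ((n - 1) / q) - 1) n := Nat.dvd_gcd hpd hpn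
      rw [hgcd q hq hqk] at this
      have h2 := Nat.le_of_dvd one_pos this
      have := hp.two_le
      omega
    -- k ∣ orderOf b via factorizations
    have hkdvd : k ∣ orderOf b := by
      rw [← Nat.factorization_le_iff_dvd (by omega) hordpos.ne']
      intro q
      by_cases hq : q.Prime
      swap
      · simp [Nat.factorization_eq_zero_of_not_prime _ hq]
      by_cases hqk : q ∣ k
      swap
      · simp [Nat.factorization_eq_zero_of_not_dvd hqk]
      by_contra hlt
      push_neg at hlt
      apply hnotdvd q hq hqk
      -- orderOf b ∣ (n-1)/q  since q * orderOf b ∣ n - 1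
      have hqn : q ∣ n - 1 := hfact ▸ hqk.mul_right Q
      rw [Nat.dvd_div_iff_mul_dvd hqn]
      rw [← Nat.factorization_le_iff_dvd ((Nat.mul_pos hq.pos hordpos).ne') (by omega)]
      intro r
      rw [Nat.factorization_mul hq.ne_zero hordpos.ne']
      have hordf : (orderOf b).factorization ≤ (n - 1).factorization :=
        (Nat.factorization_le_iff_dvd hordpos.ne' (by omega)).mpr hord
      have hkf : k.factorization ≤ (n - 1).factorization :=
        (Nat.factorization_le_iff_dvd (by omega) (by omega)).mpr ⟨Q, hfact⟩
      rw [hq.factorization]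
      simp only [Finsupp.coe_add, Pi.add_apply, Finsupp.single_apply]
      by_cases hrq : q = r
      · subst hrq
        have h1 := hkf q
        simp only [if_true, eq_self_iff_true]
        omega
      · simp only [if_neg hrq, zero_add]
        exact hordf r
    -- orderOf b ∣ p - 1
    have hp1 : b ^ (p - 1) = 1 := ZMod.pow_card_sub_one_eq_one hbne
    exact hkdvd.trans (orderOf_dvd_of_pow_eq_one hp1)
  constructor
  · intro p hp hpn
    have := main p hp hpn
    have h1 : 1 ≤ p := hp.one_lt.le
    exact ((Nat.modEq_iff_dvd' h1).mpr this).symm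
  · intro hk2 p hp hpn
    have := main p hp hpn
    have : k ≤ p - 1 := Nat.le_of_dvd (by have := hp.two_le; omega) this
    omega
end
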